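/- Let α be a composition of n. The operators π_i^{Ā*} on SIT(α) ∪ {0} satisfy the 0-Hecke algebra relations: (π_i^{Ā*})∘(π_i^{Ā*}) = π_i^{Ā*} for all 1 ≤ i ≤ n−1; π_i^{Ā*}∘π_j^{Ā*} = π_j^{Ā*}∘π_i^{Ā*} whenever |i−j| ≥ 2; and π_i^{Ā*}∘π_{i+1}^{Ā*}∘π_i^{Ā*} = π_{i+1}^{Ā*}∘π_i^{Ā*}∘π_{i+1}^{Ā*} for all 1 ≤ i ≤ n−2. -/

import Mathlib

open Classical

namespace ImmHecke

/-- A filling assigns a natural-number entry to each cell `(row, column)` (0-indexed);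
row `0` is the bottom row.  Cells outside the diagram carry the junk value `0`. -/
abbrev Filling : Type := ℕ × ℕ → ℕ

/-- `c` is a cell of the diagram of the composition `α` (0-indexed rows and columns;
row `i` has `α_i` cells). -/
def IsCell (α : List ℕ) (c : ℕ × ℕ) : Prop :=
  c.1 < α.length ∧ c.2 < α.getD c.1 0

/-- `α` is a composition of `n`: a list of positive integers summing to `n`. -/
def IsComposition (α : List ℕ) (n : ℕ) : Prop :=
  (∀ a ∈ α, 0 < a) ∧ α.sum = n

/-- `T` is a bijective filling of the diagram of `α` with the entries `1, …, n`
(where `n = α.sum`), and with value `0` off the diagram. -/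
def IsStdFilling (α : List ℕ) (T : Filling) : Prop :=
  (∀ c, ¬ IsCell α c → T c = 0) ∧
  (∀ c, IsCell α c → 1 ≤ T c ∧ T c ≤ α.sum) ∧
  (∀ c c', IsCell α c → IsCell α c' → T c = T c' → c = c') ∧
  (∀ m, 1 ≤ m → m ≤ α.sum → ∃ c, IsCell α c ∧ T c = m)

/-- A standard immaculate tableau of shape `α`: a bijective standard filling whose
first-column entries strictly increase bottom to top and whose rows strictly
increase left to right. -/
def IsSIT (α : List ℕ) (T : Filling) : Prop :=
  IsStdFilling α T ∧
  (∀ i i' : ℕ, IsCell α (i, 0) → IsCell α (i', 0) → i < i' → T (i, 0) < T (i', 0)) ∧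
  (∀ i j j' : ℕ, IsCell α (i, j) → IsCell α (i, j') → j < j' → T (i, j) < T (i, j'))

/-- A standard extended tableau of shape `α`: a bijective standard filling whose rows
strictly increase left to right and all of whose columns strictly increase
bottom to top.  Note `SET(α) ⊆ SIT(α)`. -/
def IsSET (α : List ℕ) (T : Filling) : Prop :=
  IsStdFilling α T ∧
  (∀ i j j' : ℕ, IsCell α (i, j) → IsCell α (i, j') → j < j' → T (i, j) < T (i, j')) ∧
  (∀ i i' j : ℕ, IsCell α (i, j) → IsCell α (i', j) → i < i' → T (i, j) < T (i', j))

/-- `SIT*(α)`: standard immaculate tableaux whose first column contains exactly the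
entries `1, 2, …, ℓ(α)`. -/
def IsSITstar (α : List ℕ) (T : Filling) : Prop :=
  IsSIT α T ∧
  (∀ i, IsCell α (i, 0) → 1 ≤ T (i, 0) ∧ T (i, 0) ≤ α.length) ∧
  (∀ m, 1 ≤ m → m ≤ α.length → ∃ i, IsCell α (i, 0) ∧ T (i, 0) = m)

/-- In `T`, the entry `m+1` lies in a row strictly above the row of `m`. -/
def SuccAbove (α : List ℕ) (T : Filling) (m : ℕ) : Prop :=
  ∃ c c', IsCell α c ∧ IsCell α c' ∧ T c = m ∧ T c' = m + 1 ∧ c.1 < c'.1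

/-- In `T`, the entries `m` and `m+1` lie in the same row. -/
def SuccSameRow (α : List ℕ) (T : Filling) (m : ℕ) : Prop :=
  ∃ c c', IsCell α c ∧ IsCell α c' ∧ T c = m ∧ T c' = m + 1 ∧ c.1 = c'.1

/-- In `T`, the entry `m+1` lies in a row strictly below the row of `m`. -/
def SuccBelow (α : List ℕ) (T : Filling) (m : ℕ) : Prop :=
  ∃ c c', IsCell α c ∧ IsCell α c' ∧ T c = m ∧ T c' = m + 1 ∧ c'.1 < c.1

/-- In `T`, the entries `m` and `m+1` are both in the first column. -/
def BothFirstColumn (α : List ℕ) (T : Filling) (m : ℕ) : Prop :=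
  ∃ c c', IsCell α c ∧ IsCell α c' ∧ T c = m ∧ T c' = m + 1 ∧ c.2 = 0 ∧ c'.2 = 0

/-- `s_i(T)`: exchange the entries `i` and `i+1` of `T`. -/
def swapEntries (i : ℕ) (T : Filling) : Filling :=
  fun c => if T c = i then i + 1 else if T c = i + 1 then i else T c

/-- The row-strict dual immaculate 0-Hecke operator `π_i^{RS*}` on `SIT(α) ∪ {0}`
(`0` is encoded as `none`): `π_i(T) = T` if `i+1` is strictly above `i`;
`π_i(T) = 0` if `i` and `i+1` are in the same row; `π_i(T) = s_i(T)` if `i+1` is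
strictly below `i`. -/
noncomputable def piRS (α : List ℕ) (i : ℕ) : Option Filling → Option Filling
  | none => none
  | some T =>
    if SuccAbove α T i then some T
    else if SuccSameRow α T i then none
    else some (swapEntries i T)

/-- The dual immaculate 0-Hecke operator `π_i^{S*}` on `SIT(α) ∪ {0}`:
`π_i(T) = T` if `i+1` is in a row weakly below `i`; `π_i(T) = 0` if `i` and `i+1`
are both in the first column; `π_i(T) = s_i(T)` if `i+1` is strictly above `i`
and `i, i+1` are not both in the first column. -/
noncomputable def piS (α : List ℕ) (i : ℕ) : Option Filling → Option Filling
  | none => none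
  | some T =>
    if SuccSameRow α T i ∨ SuccBelow α T i then some T
    else if BothFirstColumn α T i then none
    else some (swapEntries i T)

/-- The 0-Hecke operator `π_i^{A*}` on `SIT(α)`: `π_i(T) = T` if `i+1` is strictly
above `i` or in the same row as `i`; `π_i(T) = s_i(T)` if `i+1` is strictly below `i`. -/
noncomputable def piA (α : List ℕ) (i : ℕ) (T : Filling) : Filling :=
  if SuccBelow α T i then swapEntries i T else T

/-- The 0-Hecke operator `π_i^{Ā*}` on `SIT(α) ∪ {0}`: `π_i(T) = T` if `i+1` is
strictly below `i`; `π_i(T) = 0` if `i` and `i+1` are in the same row or both in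
the first column; `π_i(T) = s_i(T)` if `i+1` is strictly above `i` and `i, i+1`
are not both in the first column. -/
noncomputable def piAbar (α : List ℕ) (i : ℕ) : Option Filling → Option Filling
  | none => none
  | some T =>
    if SuccBelow α T i then some T
    else if SuccSameRow α T i ∨ BothFirstColumn α T i then none
    else some (swapEntries i T)

/-- `x` belongs to `SIT(α) ∪ {0}` (with `0 = none`). -/
def InSITZ (α : List ℕ) (x : Option Filling) : Prop :=
  ∀ T, x = some T → IsSIT α T

/-- Successively apply the operators `π_{i_1}^{RS*}, …, π_{i_r}^{RS*}` (the list `l = [i_1, …, i_r]`). -/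
noncomputable def applySeqRS (α : List ℕ) (l : List ℕ) (x : Option Filling) : Option Filling :=
  l.foldl (fun y i => piRS α i y) x

/-- Successively apply the operators `π_{i_1}^{S*}, …, π_{i_r}^{S*}`. -/
noncomputable def applySeqS (α : List ℕ) (l : List ℕ) (x : Option Filling) : Option Filling :=
  l.foldl (fun y i => piS α i y) x

/-- The relation `T₁ ≼ T₂` on `SIT(α)`: some sequence of operators `π_i^{RS*}`
(indices in `{1, …, n-1}`, possibly empty) sends `T₁` to `T₂`. -/
def preRS (α : List ℕ) (T₁ T₂ : Filling) : Prop :=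
  ∃ l : List ℕ, (∀ i ∈ l, 1 ≤ i ∧ i ≤ α.sum - 1) ∧ applySeqRS α l (some T₁) = some T₂

/-- The one-line notation of `σ(T)`: read the entries of `T` from right to left in
each row, rows from top to bottom. -/
def readingWord (α : List ℕ) (T : Filling) : List ℕ :=
  ((List.range α.length).reverse).flatMap
    (fun i => ((List.range (α.getD i 0)).map fun j => T (i, j)).reverse)

/-- The number of inversions of a word `w`: pairs of positions `p < q` with `w p > w q`. -/
def inversions (w : List ℕ) : ℕ :=
  ((Finset.range w.length ×ˢ Finset.range w.length).filter
    (fun pq : ℕ × ℕ => pq.1 < pq.2 ∧ w.getD pq.2 0 < w.getD pq.1 0)).card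

/-- `S⁰_α`: first column contains `1, …, ℓ` bottom to top; the remaining cells are
filled with `ℓ+1, …, n` consecutively, reading rows from top to bottom and left to
right within each row. -/
noncomputable def S0 (α : List ℕ) : Filling := fun c =>
  if IsCell α c then
    if c.2 = 0 then c.1 + 1
    else
      α.length + (((List.range α.length).filter fun r => c.1 < r).map fun r => α.getD r 0 - 1).sum + c.2
  else 0

/-- `S^{row}_α`: the row superstandard tableau, entries `1, …, n` placed consecutively
reading rows bottom to top, left to right within each row. -/
noncomputable def Srow (α : List ℕ) : Filling := fun c =>
  if IsCell α c then (α.take c.1).sum + c.2 + 1 else 0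

/-- `S^{row*}_α`: first column contains `1, …, ℓ` bottom to top; the remaining cells
are filled with `ℓ+1, …, n` consecutively, reading rows bottom to top, left to right
within each row. -/
noncomputable def SrowStar (α : List ℕ) : Filling := fun c =>
  if IsCell α c then
    if c.2 = 0 then c.1 + 1
    else α.length + ((List.range c.1).map fun r => α.getD r 0 - 1).sum + c.2
  else 0

/-- `S^{col}_α`: the column superstandard tableau, entries `1, …, n` placed
consecutively reading columns bottom to top, columns left to right. -/
noncomputable def Scol (α : List ℕ) : Filling := fun c =>
  if IsCell α c then
    ((List.range c.2).map fun j' =>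
        ((List.range α.length).filter fun r => j' < α.getD r 0).length).sum
      + ((List.range c.1).filter fun r => c.2 < α.getD r 0).length + 1
  else 0

/-- The image of a basis element of `V_α` under the linearly extended operator
`π_i^{RS*}` (the value `0` of the operator is interpreted as the zero vector). -/
noncomputable def piTargetRS (α : List ℕ) (i : ℕ) (T : {T : Filling // IsSIT α T}) :
    ({T : Filling // IsSIT α T} →₀ ℚ) :=
  match piRS α i (some T.val) with
  | none => 0
  | some T' => if h : IsSIT α T' then Finsupp.single ⟨T', h⟩ 1 else 0

/-- The operator `π_i^{RS*}` extended to a `ℚ`-linear endomorphism of the free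
`ℚ`-vector space `V_α` with basis `SIT(α)`. -/
noncomputable def piRSLin (α : List ℕ) (i : ℕ) :
    ({T : Filling // IsSIT α T} →₀ ℚ) →ₗ[ℚ] ({T : Filling // IsSIT α T} →₀ ℚ) :=
  Finsupp.lsum ℚ fun T => LinearMap.toSpanSingleton ℚ _ (piTargetRS α i T)

/-- The image of a basis element of `Z_α` under the linearly extended operator
`π_i^{RS*}`. -/
noncomputable def piTargetSET (α : List ℕ) (i : ℕ) (T : {T : Filling // IsSET α T}) :
    ({T : Filling // IsSET α T} →₀ ℚ) :=
  match piRS α i (some T.val) with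
  | none => 0
  | some T' => if h : IsSET α T' then Finsupp.single ⟨T', h⟩ 1 else 0

/-- The operator `π_i^{RS*}` extended to a `ℚ`-linear endomorphism of the free
`ℚ`-vector space `Z_α` with basis `SET(α)`. -/
noncomputable def piRSLinSET (α : List ℕ) (i : ℕ) :
    ({T : Filling // IsSET α T} →₀ ℚ) →ₗ[ℚ] ({T : Filling // IsSET α T} →₀ ℚ) :=
  Finsupp.lsum ℚ fun T => LinearMap.toSpanSingleton ℚ _ (piTargetSET α i T)

/-! ### Auxiliary lemmas for Statement 19 -/

lemma piAbar_none (α : List ℕ) (i : ℕ) : piAbar α i none = none := rfl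

lemma piAbar_some_eq (α : List ℕ) (i : ℕ) (T : Filling) :
    piAbar α i (some T) =
      if SuccBelow α T i then some T
      else if SuccSameRow α T i ∨ BothFirstColumn α T i then none
      else some (swapEntries i T) := rfl

lemma swap_val_first {i : ℕ} {T : Filling} {c : ℕ × ℕ} (h : T c = i) :
    swapEntries i T c = i + 1 := by
  simp [swapEntries, h]

lemma swap_val_second {i : ℕ} {T : Filling} {c : ℕ × ℕ} (h : T c = i + 1) :
    swapEntries i T c = i := by
  simp only [swapEntries, h]; split_ifs <;> omega

lemma swap_val_other {i : ℕ} {T : Filling} {c : ℕ × ℕ} (h1 : T c ≠ i) (h2 : T c ≠ i + 1) :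
    swapEntries i T c = T c := by
  simp [swapEntries, h1, h2]

lemma swap_comm {i j : ℕ} (h : i + 2 ≤ j ∨ j + 2 ≤ i) (T : Filling) :
    swapEntries i (swapEntries j T) = swapEntries j (swapEntries i T) := by
  funext c; simp only [swapEntries]; split_ifs <;> omega

set_option maxHeartbeats 1600000 in
lemma swap_braid (i : ℕ) (T : Filling) :
    swapEntries i (swapEntries (i + 1) (swapEntries i T)) =
      swapEntries (i + 1) (swapEntries i (swapEntries (i + 1) T)) := by
  funext c; simp only [swapEntries]; split_ifs <;> omega

lemma succBelow_iff {α : List ℕ} {T : Filling} {m : ℕ} (hstd : IsStdFilling α T)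
    {c c' : ℕ × ℕ} (hc : IsCell α c) (hc' : IsCell α c')
    (h1 : T c = m) (h2 : T c' = m + 1) :
    SuccBelow α T m ↔ c'.1 < c.1 := by
  constructor
  · rintro ⟨d, d', hd, hd', e1, e2, hlt⟩
    have hdc : d = c := hstd.2.2.1 d c hd hc (by rw [e1, h1])
    have hdc' : d' = c' := hstd.2.2.1 d' c' hd' hc' (by rw [e2, h2])
    subst hdc; subst hdc'; exact hlt
  · intro h; exact ⟨c, c', hc, hc', h1, h2, h⟩

lemma succSame_iff {α : List ℕ} {T : Filling} {m : ℕ} (hstd : IsStdFilling α T)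
    {c c' : ℕ × ℕ} (hc : IsCell α c) (hc' : IsCell α c')
    (h1 : T c = m) (h2 : T c' = m + 1) :
    SuccSameRow α T m ↔ c.1 = c'.1 := by
  constructor
  · rintro ⟨d, d', hd, hd', e1, e2, hlt⟩
    have hdc : d = c := hstd.2.2.1 d c hd hc (by rw [e1, h1])
    have hdc' : d' = c' := hstd.2.2.1 d' c' hd' hc' (by rw [e2, h2])
    subst hdc; subst hdc'; exact hlt
  · intro h; exact ⟨c, c', hc, hc', h1, h2, h⟩

lemma bfc_iff {α : List ℕ} {T : Filling} {m : ℕ} (hstd : IsStdFilling α T)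
    {c c' : ℕ × ℕ} (hc : IsCell α c) (hc' : IsCell α c')
    (h1 : T c = m) (h2 : T c' = m + 1) :
    BothFirstColumn α T m ↔ (c.2 = 0 ∧ c'.2 = 0) := by
  constructor
  · rintro ⟨d, d', hd, hd', e1, e2, hx, hy⟩
    have hdc : d = c := hstd.2.2.1 d c hd hc (by rw [e1, h1])
    have hdc' : d' = c' := hstd.2.2.1 d' c' hd' hc' (by rw [e2, h2])
    subst hdc; subst hdc'; exact ⟨hx, hy⟩
  · rintro ⟨hx, hy⟩; exact ⟨c, c', hc, hc', h1, h2, hx, hy⟩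

lemma swap_std {α : List ℕ} {T : Filling} {m : ℕ} (hstd : IsStdFilling α T)
    (hm : 1 ≤ m) (hms : m + 1 ≤ α.sum) : IsStdFilling α (swapEntries m T) := by
  obtain ⟨hoff, hbd, hinj, hsurj⟩ := hstd
  refine ⟨?_, ?_, ?_, ?_⟩
  · intro c hc
    have h0 := hoff c hc
    rw [swap_val_other (i := m) (by omega) (by omega)]
    exact h0
  · intro c hc
    have hb := hbd c hc
    simp only [swapEntries]
    split_ifs <;> omega
  · intro c c' hc hc' h
    refine hinj c c' hc hc' ?_
    revert h
    simp only [swapEntries]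
    split_ifs <;> omega
  · intro v hv1 hv2
    by_cases h1 : v = m
    · obtain ⟨d, hd, he⟩ := hsurj (m + 1) (by omega) hms
      exact ⟨d, hd, by rw [h1]; exact swap_val_second he⟩
    · by_cases h2 : v = m + 1
      · obtain ⟨d, hd, he⟩ := hsurj m hm (by omega)
        exact ⟨d, hd, by rw [h2]; exact swap_val_first he⟩
      · obtain ⟨d, hd, he⟩ := hsurj v hv1 hv2
        exact ⟨d, hd, by rw [swap_val_other (by omega) (by omega)]; exact he⟩

lemma preds_swap (α : List ℕ) (T : Filling) {m j : ℕ} (h1 : m ≠ j) (h2 : m ≠ j + 1)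
    (h3 : m + 1 ≠ j) (h4 : m + 1 ≠ j + 1) :
    (SuccBelow α (swapEntries j T) m ↔ SuccBelow α T m) ∧
    (SuccSameRow α (swapEntries j T) m ↔ SuccSameRow α T m) ∧
    (BothFirstColumn α (swapEntries j T) m ↔ BothFirstColumn α T m) := by
  have key : ∀ (v : ℕ), v ≠ j → v ≠ j + 1 → ∀ (c : ℕ × ℕ),
      (swapEntries j T c = v ↔ T c = v) := by
    intro v hv1 hv2 c; simp only [swapEntries]; split_ifs <;> omega
  have k1 := key m h1 h2
  have k2 := key (m + 1) h3 h4
  refine ⟨?_, ?_, ?_⟩ <;>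
    simp only [SuccBelow, SuccSameRow, BothFirstColumn, k1, k2]

/-- The abstract state: a filling together with the cells of `i`, `i+1`, `i+2`. -/
abbrev St : Type := Filling × (ℕ × ℕ) × (ℕ × ℕ) × (ℕ × ℕ)

noncomputable def mstep1 (i : ℕ) : Option St → Option St
  | none => none
  | some (T, p, q, r) =>
    if q.1 < p.1 then some (T, p, q, r)
    else if p.1 = q.1 ∨ (p.2 = 0 ∧ q.2 = 0) then none
    else some (swapEntries i T, q, p, r)

noncomputable def mstep2 (i : ℕ) : Option St → Option St
  | none => none
  | some (T, p, q, r) =>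
    if r.1 < q.1 then some (T, p, q, r)
    else if q.1 = r.1 ∨ (q.2 = 0 ∧ r.2 = 0) then none
    else some (swapEntries (i + 1) T, p, r, q)

lemma mstep1_some (i : ℕ) (T : Filling) (p q r : ℕ × ℕ) :
    mstep1 i (some (T, p, q, r)) =
      if q.1 < p.1 then some (T, p, q, r)
      else if p.1 = q.1 ∨ (p.2 = 0 ∧ q.2 = 0) then none
      else some (swapEntries i T, q, p, r) := rfl

lemma mstep2_some (i : ℕ) (T : Filling) (p q r : ℕ × ℕ) :
    mstep2 i (some (T, p, q, r)) =
      if r.1 < q.1 then some (T, p, q, r)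
      else if q.1 = r.1 ∨ (q.2 = 0 ∧ r.2 = 0) then none
      else some (swapEntries (i + 1) T, p, r, q) := rfl

def Good (α : List ℕ) (i : ℕ) : Option St → Prop
  | none => True
  | some s => IsStdFilling α s.1 ∧ IsCell α s.2.1 ∧ IsCell α s.2.2.1 ∧ IsCell α s.2.2.2 ∧
      s.1 s.2.1 = i ∧ s.1 s.2.2.1 = i + 1 ∧ s.1 s.2.2.2 = i + 2

lemma sim1 (α : List ℕ) (i : ℕ) (hi : 1 ≤ i) (hsum : i + 2 ≤ α.sum) (s : Option St)
    (hs : Good α i s) :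
    piAbar α i (s.map Prod.fst) = (mstep1 i s).map Prod.fst ∧ Good α i (mstep1 i s) := by
  cases s with
  | none => exact ⟨rfl, trivial⟩
  | some t =>
    obtain ⟨T, p, q, r⟩ := t
    have hs' : IsStdFilling α T ∧ IsCell α p ∧ IsCell α q ∧ IsCell α r ∧
        T p = i ∧ T q = i + 1 ∧ T r = i + 2 := hs
    obtain ⟨hstd, hp, hq, hr, vp, vq, vr⟩ := hs'
    have hb := succBelow_iff hstd hp hq vp vq
    have hsr := succSame_iff hstd hp hq vp vq
    have hbf := bfc_iff hstd hp hq vp vq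
    have hmap : (Option.map Prod.fst (some (T, p, q, r) : Option St)) = some T := rfl
    rw [hmap, piAbar_some_eq, hb, hsr, hbf, mstep1_some]
    by_cases h1 : q.1 < p.1
    · simp only [if_pos h1]
      exact ⟨rfl, hstd, hp, hq, hr, vp, vq, vr⟩
    · simp only [if_neg h1]
      by_cases h2 : p.1 = q.1 ∨ (p.2 = 0 ∧ q.2 = 0)
      · simp only [if_pos h2]; exact ⟨rfl, trivial⟩
      · simp only [if_neg h2]
        refine ⟨rfl, ?_⟩
        show IsStdFilling α (swapEntries i T) ∧ IsCell α q ∧ IsCell α p ∧ IsCell α r ∧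
          swapEntries i T q = i ∧ swapEntries i T p = i + 1 ∧ swapEntries i T r = i + 2
        refine ⟨swap_std hstd hi (by omega), hq, hp, hr,
          swap_val_second vq, swap_val_first vp, ?_⟩
        rw [swap_val_other (i := i) (by omega) (by omega)]; exact vr

lemma sim2 (α : List ℕ) (i : ℕ) (hsum : i + 2 ≤ α.sum) (s : Option St)
    (hs : Good α i s) :
    piAbar α (i + 1) (s.map Prod.fst) = (mstep2 i s).map Prod.fst ∧
      Good α i (mstep2 i s) := by
  cases s with
  | none => exact ⟨rfl, trivial⟩
  | some t =>
    obtain ⟨T, p, q, r⟩ := t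
    have hs' : IsStdFilling α T ∧ IsCell α p ∧ IsCell α q ∧ IsCell α r ∧
        T p = i ∧ T q = i + 1 ∧ T r = i + 2 := hs
    obtain ⟨hstd, hp, hq, hr, vp, vq, vr⟩ := hs'
    have vr' : T r = (i + 1) + 1 := by omega
    have hb := succBelow_iff (m := i + 1) hstd hq hr vq vr'
    have hsr := succSame_iff (m := i + 1) hstd hq hr vq vr'
    have hbf := bfc_iff (m := i + 1) hstd hq hr vq vr'
    have hmap : (Option.map Prod.fst (some (T, p, q, r) : Option St)) = some T := rfl
    rw [hmap, piAbar_some_eq, hb, hsr, hbf, mstep2_some]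
    by_cases h1 : r.1 < q.1
    · simp only [if_pos h1]
      exact ⟨rfl, hstd, hp, hq, hr, vp, vq, vr⟩
    · simp only [if_neg h1]
      by_cases h2 : q.1 = r.1 ∨ (q.2 = 0 ∧ r.2 = 0)
      · simp only [if_pos h2]; exact ⟨rfl, trivial⟩
      · simp only [if_neg h2]
        refine ⟨rfl, ?_⟩
        show IsStdFilling α (swapEntries (i + 1) T) ∧ IsCell α p ∧ IsCell α r ∧ IsCell α q ∧
          swapEntries (i + 1) T p = i ∧ swapEntries (i + 1) T r = i + 1 ∧
          swapEntries (i + 1) T q = i + 2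
        refine ⟨swap_std hstd (by omega) (by omega), hp, hr, hq, ?_, ?_, ?_⟩
        · rw [swap_val_other (i := i + 1) (by omega) (by omega)]; exact vp
        · exact swap_val_second vr'
        · have h := swap_val_first (i := i + 1) vq; omega

set_option maxHeartbeats 3200000 in
lemma model_braid (i : ℕ) (s : Option St) :
    mstep1 i (mstep2 i (mstep1 i s)) = mstep2 i (mstep1 i (mstep2 i s)) := by
  cases s with
  | none => rfl
  | some t =>
    obtain ⟨T, p, q, r⟩ := t
    simp only [mstep1_some, mstep2_some]
    split_ifs <;> simp only [mstep1, mstep2, mstep1_some, mstep2_some] <;>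
      (try split_ifs) <;> simp only [mstep1, mstep2, mstep1_some, mstep2_some] <;>
      (try split_ifs) <;> first | rfl | omega | (rw [swap_braid])

theorem piAbar_hecke_relations (n : ℕ) (α : List ℕ) (hα : IsComposition α n) :
    (∀ i, 1 ≤ i → i ≤ n - 1 →
      ∀ x : Option Filling, InSITZ α x → piAbar α i (piAbar α i x) = piAbar α i x) ∧
    (∀ i j, 1 ≤ i → i ≤ n - 1 → 1 ≤ j → j ≤ n - 1 → (i + 2 ≤ j ∨ j + 2 ≤ i) →
      ∀ x : Option Filling, InSITZ α x →
        piAbar α i (piAbar α j x) = piAbar α j (piAbar α i x)) ∧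
    (∀ i, 1 ≤ i → i + 1 ≤ n - 1 →
      ∀ x : Option Filling, InSITZ α x →
        piAbar α i (piAbar α (i + 1) (piAbar α i x)) =
          piAbar α (i + 1) (piAbar α i (piAbar α (i + 1) x))) := by
  obtain ⟨hpos, hsum⟩ := hα
  refine ⟨?_, ?_, ?_⟩
  · -- idempotence
    intro i hi hin x hx
    cases x with
    | none => rfl
    | some T =>
      have hstd := (hx T rfl).1
      have hs : i + 1 ≤ α.sum := by omega
      obtain ⟨p, hp, vp⟩ := hstd.2.2.2 i hi (by omega)
      obtain ⟨q, hq, vq⟩ := hstd.2.2.2 (i + 1) (by omega) hs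
      have hb := succBelow_iff hstd hp hq vp vq
      have hsr := succSame_iff hstd hp hq vp vq
      simp only [piAbar_some_eq]
      by_cases h1 : SuccBelow α T i
      · rw [if_pos h1, piAbar_some_eq, if_pos h1]
      · rw [if_neg h1]
        by_cases h2 : SuccSameRow α T i ∨ BothFirstColumn α T i
        · rw [if_pos h2]; rfl
        · rw [if_neg h2, piAbar_some_eq]
          have h4 : ¬ q.1 < p.1 := fun hc => h1 (hb.mpr hc)
          have h5 : ¬ p.1 = q.1 := fun hc => h2 (Or.inl (hsr.mpr hc))
          have h3 : SuccBelow α (swapEntries i T) i :=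
            ⟨q, p, hq, hp, swap_val_second vq, swap_val_first vp, by omega⟩
          rw [if_pos h3]
  · -- far commutation
    intro i j hi hin hj hjn hfar x hx
    cases x with
    | none => rfl
    | some T =>
      obtain ⟨bi, si, fi⟩ := preds_swap (m := i) (j := j) α T
        (by omega) (by omega) (by omega) (by omega)
      obtain ⟨bj, sj, fj⟩ := preds_swap (m := j) (j := i) α T
        (by omega) (by omega) (by omega) (by omega)
      by_cases hBi : SuccBelow α T i <;> by_cases hBj : SuccBelow α T j <;>
        by_cases hZi : SuccSameRow α T i ∨ BothFirstColumn α T i <;>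
        by_cases hZj : SuccSameRow α T j ∨ BothFirstColumn α T j <;>
        simp only [piAbar_some_eq, piAbar_none, bi, si, fi, bj, sj, fj,
          hBi, hBj, hZi, hZj, not_false_iff, if_true, if_false, ite_true, ite_false,
          eq_self_iff_true, or_false, false_or, or_true, true_or] <;>
        (try rw [swap_comm hfar])
  · -- braid relation
    intro i hi hin x hx
    cases x with
    | none => rfl
    | some T =>
      have hstd := (hx T rfl).1
      have hs2 : i + 2 ≤ α.sum := by omega
      obtain ⟨p, hp, vp⟩ := hstd.2.2.2 i hi (by omega)
      obtain ⟨q, hq, vq⟩ := hstd.2.2.2 (i + 1) (by omega) (by omega)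
      obtain ⟨r, hr, vr⟩ := hstd.2.2.2 (i + 2) (by omega) hs2
      have hg : Good α i (some (T, p, q, r)) := ⟨hstd, hp, hq, hr, vp, vq, vr⟩
      have e0 : (some T : Option Filling) =
          (some (T, p, q, r) : Option St).map Prod.fst := rfl
      rw [e0]
      obtain ⟨e1, g1⟩ := sim1 α i hi hs2 _ hg
      obtain ⟨e2, g2⟩ := sim2 α i hs2 _ g1
      obtain ⟨e3, _⟩ := sim1 α i hi hs2 _ g2
      obtain ⟨f1, k1⟩ := sim2 α i hs2 _ hg
      obtain ⟨f2, k2⟩ := sim1 α i hi hs2 _ k1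
      obtain ⟨f3, _⟩ := sim2 α i hs2 _ k2
      rw [e1, e2, e3, f1, f2, f3, model_braid]

end ImmHecke
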